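/- Let A ∈ ℝ^{n×d} have full column rank, with rows a_1,…,a_n. Then for every i ∈ {1,…,n}, the ℓ1 sensitivity σ_1(a_i) and the leverage score τ_i(A) satisfy √(τ_i(A)/n) ≤ σ_1(a_i) ≤ √(τ_i(A)). -/

import Mathlib

open Matrix BigOperators

/-- The ℓp sensitivity of a vector `a` with respect to a matrix `B`:
`σ_p^B(a) = sup { |⟨a,x⟩|^p / ‖Bx‖_p^p : x, Bx ≠ 0 }`. -/
noncomputable def sens (p : ℝ) {m d : ℕ} (B : Matrix (Fin m) (Fin d) ℝ)
    (a : Fin d → ℝ) : ℝ :=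
  sSup {r : ℝ | ∃ x : Fin d → ℝ, B.mulVec x ≠ 0 ∧
    r = |a ⬝ᵥ x| ^ p / ∑ i, |B.mulVec x i| ^ p}

/-- The leverage score of row `i` of a full-column-rank matrix `A`:
`τ_i(A) = a_iᵀ (AᵀA)⁻¹ a_i`. -/
noncomputable def leverageScore {n d : ℕ} (A : Matrix (Fin n) (Fin d) ℝ) (i : Fin n) : ℝ :=
  A i ⬝ᵥ ((Aᵀ * A)⁻¹).mulVec (A i)

/-- **Crude ℓ1 sensitivity approximation via leverage scores:**
`√(τ_i(A)/n) ≤ σ_1(a_i) ≤ √(τ_i(A))`. -/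
theorem l1_sensitivity_leverage_sandwich
    {n d : ℕ} (A : Matrix (Fin n) (Fin d) ℝ)
    (hA : LinearIndependent ℝ Aᵀ) (i : Fin n) :
    Real.sqrt (leverageScore A i / n) ≤ sens 1 A (A i) ∧
      sens 1 A (A i) ≤ Real.sqrt (leverageScore A i) := by
  
  classical
  set a : Fin d → ℝ := A i with ha
  set M : Matrix (Fin d) (Fin d) ℝ := Aᵀ * A with hM
  -- injectivity of mulVec
  have hinj : Function.Injective (A.mulVec) := Matrix.mulVec_injective_iff.2 hA
  have hMinj : Function.Injective (M.mulVec) := by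
    intro x y h
    apply hinj
    have h2 : M *ᵥ (x - y) = 0 := by rw [mulVec_sub, h, sub_self]
    have h3 := (Matrix.conjTranspose_mul_self_mulVec_eq_zero A (x - y)).1 (by simpa using h2)
    rw [mulVec_sub] at h3
    exact sub_eq_zero.1 h3
  have hMunit : IsUnit M.det := (Matrix.isUnit_iff_isUnit_det M).1 (Matrix.mulVec_injective_iff_isUnit.1 hMinj)
  have hMMinv : M * M⁻¹ = 1 := Matrix.mul_nonsing_inv _ hMunit
  have hMsymm : Mᵀ = M := by rw [hM, transpose_mul, transpose_transpose]
  set u : Fin d → ℝ := M⁻¹ *ᵥ a with hu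
  set v : Fin n → ℝ := A *ᵥ u with hv
  have hMu : M *ᵥ u = a := by
    rw [hu, mulVec_mulVec, hMMinv, one_mulVec]
  -- key identity
  have key : ∀ x y : Fin d → ℝ, (A *ᵥ x) ⬝ᵥ (A *ᵥ y) = x ⬝ᵥ (M *ᵥ y) := by
    intro x y
    rw [hM, ← mulVec_mulVec, dotProduct_mulVec x, vecMul_transpose]
  have hax : ∀ x : Fin d → ℝ, a ⬝ᵥ x = v ⬝ᵥ (A *ᵥ x) := by
    intro x
    rw [hv, key, dotProduct_mulVec, ← hMsymm, ← mulVec_transpose, transpose_transpose, hMu]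
  have hτv : leverageScore A i = v ⬝ᵥ v := by
    rw [hv, key, hMu, leverageScore, dotProduct_comm]
  set τ : ℝ := leverageScore A i with hτ
  have hτ0 : 0 ≤ τ := by
    rw [hτv]; exact Finset.sum_nonneg fun k _ => mul_self_nonneg _
  -- Cauchy-Schwarz: (a ⬝ᵥ x)^2 ≤ τ * ∑ (A *ᵥ x) k ^ 2
  have hCS : ∀ x : Fin d → ℝ, (a ⬝ᵥ x) ^ 2 ≤ τ * ∑ k, (A *ᵥ x) k ^ 2 := by
    intro x
    rw [hax, hτv]
    have := Finset.sum_mul_sq_le_sq_mul_sq Finset.univ v (A *ᵥ x)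
    calc (v ⬝ᵥ (A *ᵥ x)) ^ 2 = (∑ k, v k * (A *ᵥ x) k) ^ 2 := rfl
      _ ≤ (∑ k, v k ^ 2) * ∑ k, (A *ᵥ x) k ^ 2 := this
      _ = (v ⬝ᵥ v) * ∑ k, (A *ᵥ x) k ^ 2 := by
          congr 1; simp [dotProduct, sq]
  -- ℓ2² ≤ ℓ1² pointwise sum bound
  have hl2l1 : ∀ w : Fin n → ℝ, ∑ k, w k ^ 2 ≤ (∑ k, |w k|) ^ 2 := by
    intro w
    calc ∑ k, w k ^ 2 = ∑ k, |w k| * |w k| := by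
          refine Finset.sum_congr rfl fun k _ => ?_
          rw [← sq_abs, sq]
      _ ≤ ∑ k, |w k| * ∑ j, |w j| := by
          refine Finset.sum_le_sum fun k _ => ?_
          exact mul_le_mul_of_nonneg_left
            (Finset.single_le_sum (f := fun j => |w j|) (fun j _ => abs_nonneg _)
              (Finset.mem_univ k)) (abs_nonneg _)
      _ = (∑ k, |w k|) ^ 2 := by rw [← Finset.sum_mul, sq]
  -- ℓ1² ≤ n * ℓ2²
  have hl1l2 : ∀ w : Fin n → ℝ, (∑ k, |w k|) ^ 2 ≤ n * ∑ k, w k ^ 2 := by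
    intro w
    have := Finset.sum_mul_sq_le_sq_mul_sq Finset.univ (fun _ : Fin n => (1:ℝ)) (fun k => |w k|)
    simp only [one_mul, one_pow, Finset.sum_const, Finset.card_univ, Fintype.card_fin,
      nsmul_eq_mul, mul_one, sq_abs] at this
    exact this
  -- upper bound
  have hub : ∀ r ∈ {r : ℝ | ∃ x : Fin d → ℝ, A.mulVec x ≠ 0 ∧
      r = |a ⬝ᵥ x| ^ (1:ℝ) / ∑ k, |A.mulVec x k| ^ (1:ℝ)}, r ≤ Real.sqrt τ := by
    rintro r ⟨x, hx, rfl⟩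
    simp only [Real.rpow_one]
    set S1 : ℝ := ∑ k, |A.mulVec x k| with hS1
    have hS1nn : 0 ≤ S1 := Finset.sum_nonneg fun k _ => abs_nonneg _
    have hS1pos : 0 < S1 := by
      rcases Function.ne_iff.1 hx with ⟨k, hk⟩
      have : 0 < |A.mulVec x k| := abs_pos.2 (by simpa using hk)
      calc (0:ℝ) < |A.mulVec x k| := this
        _ ≤ S1 := Finset.single_le_sum (f := fun j => |A.mulVec x j|) (fun j _ => abs_nonneg _) (Finset.mem_univ k)
    rw [div_le_iff₀ hS1pos]
    have h2 : |a ⬝ᵥ x| ^ 2 ≤ τ * S1 ^ 2 := by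
      rw [sq_abs]
      calc (a ⬝ᵥ x) ^ 2 ≤ τ * ∑ k, (A *ᵥ x) k ^ 2 := hCS x
        _ ≤ τ * S1 ^ 2 := by
            apply mul_le_mul_of_nonneg_left _ hτ0
            exact hl2l1 _
    calc |a ⬝ᵥ x| = Real.sqrt (|a ⬝ᵥ x| ^ 2) := (Real.sqrt_sq (abs_nonneg _)).symm
      _ ≤ Real.sqrt (τ * S1 ^ 2) := Real.sqrt_le_sqrt h2
      _ = Real.sqrt τ * S1 := by
          rw [Real.sqrt_mul hτ0, Real.sqrt_sq hS1nn]
  constructor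
  · -- lower bound
    rcases eq_or_lt_of_le hτ0 with h0 | hpos
    · rw [← h0]
      simp only [zero_div, Real.sqrt_zero]
      apply Real.sSup_nonneg
      rintro r ⟨x, hx, rfl⟩
      apply div_nonneg (Real.rpow_nonneg (abs_nonneg _) _)
      exact Finset.sum_nonneg fun k _ => Real.rpow_nonneg (abs_nonneg _) _
    · -- τ > 0
      have hvne : A.mulVec u ≠ 0 := by
        intro h
        rw [hτv, hv, h] at hpos
        simp at hpos
      set S1 : ℝ := ∑ k, |v k| with hS1
      have hS1pos : 0 < S1 := by
        rcases Function.ne_iff.1 (hv ▸ hvne) with ⟨k, hk⟩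
        calc (0:ℝ) < |v k| := abs_pos.2 hk
          _ ≤ S1 := Finset.single_le_sum (f := fun j => |v j|) (fun j _ => abs_nonneg _) (Finset.mem_univ k)
      have hmem : τ / S1 ∈ {r : ℝ | ∃ x : Fin d → ℝ, A.mulVec x ≠ 0 ∧
          r = |a ⬝ᵥ x| ^ (1:ℝ) / ∑ k, |A.mulVec x k| ^ (1:ℝ)} := by
        refine ⟨u, hvne, ?_⟩
        have : a ⬝ᵥ u = τ := by rw [hτ, leverageScore]
        simp only [Real.rpow_one, this, abs_of_nonneg hτ0]
        rfl
      have hbdd : BddAbove {r : ℝ | ∃ x : Fin d → ℝ, A.mulVec x ≠ 0 ∧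
          r = |a ⬝ᵥ x| ^ (1:ℝ) / ∑ k, |A.mulVec x k| ^ (1:ℝ)} := ⟨Real.sqrt τ, hub⟩
      have hn : 0 < (n:ℝ) := by
        rcases Function.ne_iff.1 (hv ▸ hvne) with ⟨k, _⟩
        exact_mod_cast k.pos
      have hS1sq : S1 ^ 2 ≤ n * τ := by
        have h2 := hl1l2 v
        rw [hτv]
        calc S1 ^ 2 ≤ (n:ℝ) * ∑ k, v k ^ 2 := h2
          _ = (n:ℝ) * (v ⬝ᵥ v) := by congr 1; simp [dotProduct, sq]
      have hle : Real.sqrt (τ / n) ≤ τ / S1 := by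
        rw [le_div_iff₀ hS1pos]
        have hτn : 0 ≤ τ / (n:ℝ) := div_nonneg hτ0 hn.le
        calc Real.sqrt (τ / n) * S1 = Real.sqrt (τ / n * S1 ^ 2) := by
              rw [Real.sqrt_mul hτn, Real.sqrt_sq hS1pos.le]
          _ ≤ Real.sqrt (τ / n * ((n:ℝ) * τ)) :=
              Real.sqrt_le_sqrt (mul_le_mul_of_nonneg_left hS1sq hτn)
          _ = τ := by
              rw [show τ / (n:ℝ) * ((n:ℝ) * τ) = τ ^ 2 by field_simp, Real.sqrt_sq hτ0]
      exact le_trans hle (le_csSup hbdd hmem)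
  · exact Real.sSup_le hub (Real.sqrt_nonneg _)
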